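/- Let n ≥ 1, let 𝒜 be a commutative subalgebra of the ℝ-algebra ℍ (i.e., x * y = y * x for all x, y ∈ 𝒜), and let p q : ℍ satisfy p * x = x * p and q * x = x * q for all x ∈ 𝒜, with ¬(p = 0 ∧ q = 0). Let a b : ℤ → ℍ satisfy: a t ∈ 𝒜 and b t ∈ 𝒜 for all t ∈ ℤ; p * a (t - n) = q * a t and p * b (t - n) = q * b t for every integer t with 1 ≤ t ≤ n - 1. Let A B : Matrix (Fin n) (Fin n) ℍ be given by A r s = a ((r : ℤ) - s) and B r s = b ((r : ℤ) - s). Then A * B = B * A. -/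

import Mathlib

/-- Auxiliary cancellation lemma in the quaternions. -/
lemma Gpq_aux (p q α β α' β' : Quaternion ℝ)
    (hp0 : p ≠ 0 ∨ q ≠ 0)
    (hpα : p * α = α * p) (hqα : q * α = α * q)
    (e1 : p * α = q * α') (e2 : p * β' = q * β) :
    α * β = α' * β' := by
  by_cases hq : q = 0
  · have hp' : p ≠ 0 := by tauto
    subst hq
    simp only [zero_mul] at e1 e2
    have hα : α = 0 := by
      rcases mul_eq_zero.mp e1 with h | h
      · exact absurd h hp'
      · exact h
    have hβ' : β' = 0 := by
      rcases mul_eq_zero.mp e2 with h | h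
      · exact absurd h hp'
      · exact h
    simp [hα, hβ']
  · by_cases hp : p = 0
    · subst hp
      simp only [zero_mul] at e1 e2
      have hα' : α' = 0 := by
        rcases mul_eq_zero.mp e1.symm with h | h
        · exact absurd h hq
        · exact h
      have hβ : β = 0 := by
        rcases mul_eq_zero.mp e2.symm with h | h
        · exact absurd h hq
        · exact h
      simp [hα', hβ]
    · have key : p * (q * (α' * β')) = p * (q * (α * β)) := by
        rw [← mul_assoc q α' β', ← e1, mul_assoc p α β',
          show p * (p * (α * β')) = p * (α * (p * β')) from by
            rw [← mul_assoc p α β', hpα, mul_assoc α p β'],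
          e2, ← mul_assoc α q β, ← hqα, mul_assoc q α β]
      exact (mul_left_cancel₀ hq (mul_left_cancel₀ hp key)).symm

theorem Gpq_commutative_of_commutative_subalgebra (n : ℕ) (hn : 1 ≤ n)
    (𝒜 : Subalgebra ℝ (Quaternion ℝ))
    (hcomm : ∀ x ∈ 𝒜, ∀ y ∈ 𝒜, x * y = y * x)
    (p q : Quaternion ℝ)
    (hp : ∀ x ∈ 𝒜, p * x = x * p) (hq : ∀ x ∈ 𝒜, q * x = x * q)
    (hpq : ¬ (p = 0 ∧ q = 0))
    (a b : ℤ → Quaternion ℝ)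
    (ha𝒜 : ∀ t : ℤ, a t ∈ 𝒜) (hb𝒜 : ∀ t : ℤ, b t ∈ 𝒜)
    (ha : ∀ t : ℤ, 1 ≤ t → t ≤ (n : ℤ) - 1 → p * a (t - n) = q * a t)
    (hb : ∀ t : ℤ, 1 ≤ t → t ≤ (n : ℤ) - 1 → p * b (t - n) = q * b t)
    (A B : Matrix (Fin n) (Fin n) (Quaternion ℝ))
    (hA : ∀ r s : Fin n, A r s = a ((r : ℤ) - (s : ℤ)))
    (hB : ∀ r s : Fin n, B r s = b ((r : ℤ) - (s : ℤ))) :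
    A * B = B * A := by
  haveI : NeZero n := ⟨by omega⟩
  have hp0 : p ≠ 0 ∨ q ≠ 0 := by tauto
  refine Matrix.ext fun r s => ?_
  rw [Matrix.mul_apply, Matrix.mul_apply]
  have key : ∀ k m : Fin n, k + m = r + s →
      A r k * B k s = a ((m : ℤ) - (s : ℤ)) * b ((r : ℤ) - (m : ℤ)) := by
    intro k m hkm
    have hval : ((k : ℕ) + (m : ℕ)) % n = ((r : ℕ) + (s : ℕ)) % n := by
      have h1 : (k + m).val = (r + s).val := congrArg Fin.val hkm
      rwa [Fin.val_add, Fin.val_add] at h1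
    have hkn := k.isLt
    have hmn := m.isLt
    have hrn := r.isLt
    have hsn := s.isLt
    have hd : ((k : ℤ) + (m : ℤ) = (r : ℤ) + (s : ℤ))
        ∨ ((k : ℤ) + (m : ℤ) = (r : ℤ) + (s : ℤ) + n)
        ∨ ((k : ℤ) + (m : ℤ) = (r : ℤ) + (s : ℤ) - n) := by
      rcases Nat.lt_or_ge ((k : ℕ) + (m : ℕ)) n with h1 | h1 <;>
        rcases Nat.lt_or_ge ((r : ℕ) + (s : ℕ)) n with h2 | h2 <;>
        [ rw [Nat.mod_eq_of_lt h1, Nat.mod_eq_of_lt h2] at hval;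
          rw [Nat.mod_eq_of_lt h1, Nat.mod_eq_sub_mod h2,
            Nat.mod_eq_of_lt (by omega)] at hval;
          rw [Nat.mod_eq_sub_mod h1, Nat.mod_eq_of_lt (by omega),
            Nat.mod_eq_of_lt h2] at hval;
          rw [Nat.mod_eq_sub_mod h1, Nat.mod_eq_of_lt (by omega),
            Nat.mod_eq_sub_mod h2, Nat.mod_eq_of_lt (by omega)] at hval] <;>
        omega
    rw [hA, hB]
    rcases hd with h | h | h
    · rw [show (m : ℤ) - (s : ℤ) = (r : ℤ) - (k : ℤ) by omega,
        show (r : ℤ) - (m : ℤ) = (k : ℤ) - (s : ℤ) by omega]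
    · -- wrap-around: k + m = r + s + n
      rw [show (m : ℤ) - (s : ℤ) = ((r : ℤ) - (k : ℤ)) + n by omega,
        show (r : ℤ) - (m : ℤ) = ((k : ℤ) - (s : ℤ)) - n by omega]
      have e1 := ha ((r : ℤ) - (k : ℤ) + n) (by omega) (by omega)
      rw [show (r : ℤ) - (k : ℤ) + n - n = (r : ℤ) - (k : ℤ) by ring] at e1
      have e2 := hb ((k : ℤ) - (s : ℤ)) (by omega) (by omega)
      exact Gpq_aux p q _ _ _ _ hp0 (hp _ (ha𝒜 _)) (hq _ (ha𝒜 _)) e1 e2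
    · -- wrap-around: k + m = r + s - n
      rw [show (m : ℤ) - (s : ℤ) = ((r : ℤ) - (k : ℤ)) - n by omega,
        show (r : ℤ) - (m : ℤ) = ((k : ℤ) - (s : ℤ)) + n by omega]
      have e1 := ha ((r : ℤ) - (k : ℤ)) (by omega) (by omega)
      have e2 := hb ((k : ℤ) - (s : ℤ) + n) (by omega) (by omega)
      rw [show (k : ℤ) - (s : ℤ) + n - n = (k : ℤ) - (s : ℤ) by ring] at e2
      exact (Gpq_aux p q _ _ _ _ hp0 (hp _ (ha𝒜 _)) (hq _ (ha𝒜 _)) e1 e2).symm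
  calc ∑ k, A r k * B k s
      = ∑ m : Fin n, a ((m : ℤ) - (s : ℤ)) * b ((r : ℤ) - (m : ℤ)) :=
        Fintype.sum_equiv (Equiv.subLeft (r + s)) _ _ fun k =>
          key k (Equiv.subLeft (r + s) k) (by rw [Equiv.subLeft_apply]; abel)
    _ = ∑ m : Fin n, B r m * A m s := by
        refine Finset.sum_congr rfl fun m _ => ?_
        rw [hA, hB]
        exact hcomm _ (ha𝒜 _) _ (hb𝒜 _)
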